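/- Let (≿_i)_{i∈N} be a profile of dichotomous preferences with acceptable sets A_i ⊆ X, and for x ∈ X let A_x = {i ∈ N : x ∈ A_i}. Call outcomes x, y equivalent if A_x = A_y. Then any set of pairwise non-equivalent Pareto optimal outcomes has cardinality at most the binomial coefficient C(|N|, ⌊|N|/2⌋). -/

import Mathlib

attribute [local instance] Classical.propDecidable

/-- The strict part of a preference relation. -/
def strictPref {X : Type*} (r : X → X → Prop) (x y : X) : Prop := r x y ∧ ¬ r y x

/-- A preference: a complete (total) and transitive binary relation. -/
def IsPrefOrder {X : Type*} (r : X → X → Prop) : Prop :=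
  (∀ x y, r x y ∨ r y x) ∧ Transitive r

/-- A lottery over the finite set of outcomes `X`. -/
def IsLottery {X : Type*} [Fintype X] (p : X → ℝ) : Prop :=
  (∀ x, 0 ≤ p x) ∧ ∑ x, p x = 1

/-- Total weight a lottery `p` places on outcomes strictly preferred to `x`. -/
noncomputable def upWeight {X : Type*} [Fintype X] (r : X → X → Prop) (p : X → ℝ) (x : X) : ℝ :=
  ∑ y ∈ Finset.univ.filter (fun y => strictPref r y x), p y

/-- First-order stochastic dominance (weak): `p ≿ q`. -/
def SDge {X : Type*} [Fintype X] (r : X → X → Prop) (p q : X → ℝ) : Prop :=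
  ∀ x, upWeight r q x ≤ upWeight r p x

/-- First-order stochastic dominance (strict): `p ≻ q`. -/
def SDgt {X : Type*} [Fintype X] (r : X → X → Prop) (p q : X → ℝ) : Prop :=
  SDge r p q ∧ ∃ x, upWeight r q x < upWeight r p x

/-- A lottery `p` is ex-ante efficient if no lottery weakly SD-dominates it for all agents
and strictly for some agent. -/
def ExAnteEff {X N : Type*} [Fintype X] (pref : N → X → X → Prop) (p : X → ℝ) : Prop :=
  ¬ ∃ q : X → ℝ, IsLottery q ∧ (∀ i, SDge (pref i) q p) ∧ ∃ j, SDgt (pref j) q p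

/-- An outcome is Pareto optimal if no outcome is weakly better for all agents and
strictly better for some agent. -/
def ParetoOptimal {X N : Type*} (pref : N → X → X → Prop) (x : X) : Prop :=
  ¬ ∃ y, (∀ i, pref i y x) ∧ ∃ j, strictPref (pref j) y x

/-- A lottery is ex-post efficient if it is supported on Pareto optimal outcomes. -/
def ExPostEff {X N : Type*} [Fintype X] (pref : N → X → X → Prop) (p : X → ℝ) : Prop :=
  ∀ x, 0 < p x → ParetoOptimal pref x

/-- `u` is a utility representation of the preference `r`. -/
def Represents {X : Type*} (u : X → ℝ) (r : X → X → Prop) : Prop :=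
  ∀ x y, (u y ≤ u x ↔ r x y)

/-- A preference is dichotomous with set `A` of acceptable outcomes. -/
def Dichotomous {X : Type*} (r : X → X → Prop) (A : Set X) : Prop :=
  ∀ x y, r x y ↔ (x ∈ A ∨ y ∉ A)


/-- With dichotomous preferences, any set of pairwise non-equivalent Pareto
optimal outcomes has at most `C(|N|, ⌊|N|/2⌋)` elements. -/
theorem stmt_14 {X N : Type*} [Fintype X] [Nonempty X] [Fintype N] [Nonempty N]
    (pref : N → X → X → Prop) (A : N → Set X)
    (hpref : ∀ i, Dichotomous (pref i) (A i))
    (Y : Finset X) (hYpo : ∀ x ∈ Y, ParetoOptimal pref x)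
    (hYne : ∀ x ∈ Y, ∀ y ∈ Y, x ≠ y → {i : N | x ∈ A i} ≠ {i : N | y ∈ A i}) :
    Y.card ≤ Nat.choose (Fintype.card N) (Fintype.card N / 2) := by
    classical
  set f : X → Finset N := fun x => Finset.univ.filter (fun i => x ∈ A i) with hf
  -- key: if f x ⊂ f y (strictly), x not Pareto optimal
  have key : ∀ x ∈ Y, ∀ y ∈ Y, x ≠ y → ¬ f x ⊆ f y := by
    intro x hx y hy hxy hsub
    have hne : f x ≠ f y := by
      intro h
      apply hYne x hx y hy hxy
      ext i
      constructor <;> intro hi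
      · have : i ∈ f x := Finset.mem_filter.mpr ⟨Finset.mem_univ i, hi⟩
        rw [h] at this; simpa [hf] using this
      · have : i ∈ f y := Finset.mem_filter.mpr ⟨Finset.mem_univ i, hi⟩
        rw [← h] at this; simpa [hf] using this
    obtain ⟨j, hjy, hjx⟩ := Finset.exists_of_ssubset (hsub.ssubset_of_ne hne)
    simp only [hf, Finset.mem_filter, Finset.mem_univ, true_and] at hjy hjx
    apply hYpo x hx
    refine ⟨y, fun i => ?_, j, ?_⟩
    · rw [hpref i]
      by_cases hxi : x ∈ A i
      · left
        have : i ∈ f x := by simp [hf, hxi]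
        have := hsub this
        simpa [hf] using this
      · right; exact hxi
    · constructor
      · rw [hpref j]; left; exact hjy
      · rw [hpref j]; push_neg; exact ⟨hjx, hjy⟩
  have hinj : Set.InjOn f Y := by
    intro x hx y hy h
    by_contra hxy
    exact key x hx y hy hxy (le_of_eq h)
  have hcard : Y.card = (Y.image f).card := (Finset.card_image_of_injOn hinj).symm
  rw [hcard]
  apply IsAntichain.sperner
  intro s hs t ht hst hsub
  simp only [Finset.coe_image, Set.mem_image, Finset.mem_coe] at hs ht
  obtain ⟨x, hx, rfl⟩ := hs
  obtain ⟨y, hy, rfl⟩ := ht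
  exact key x hx y hy (fun h => hst (by rw [h])) hsub
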